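/- For every natural number n ≥ 1 and every signed permutation w of n, Σ_{1 ≤ i < j ≤ n} f̃_ij(w) = (n − 1) − 2·des(w). (This is the identity underlying the fact that the normalised descent statistic is an eigenfunction of the riffle-shuffles with flip.) -/
import Mathlib


open scoped Classical

/-- `w : Fin n → ℤ` is a signed permutation of `n`: each entry has absolute value in
`{1,…,n}` and the absolute values are pairwise distinct (hence a permutation of `1,…,n`);
in particular every entry is nonzero. -/
def IsSignedPerm {n : ℕ} (w : Fin n → ℤ) : Prop :=
  (∀ t, 1 ≤ (w t).natAbs ∧ (w t).natAbs ≤ n) ∧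
    Function.Injective fun t => (w t).natAbs

/-- The number of descents of `w`: positions `t` with `w t > w (t+1)` (usual integer
order). -/
noncomputable def des {n : ℕ} (w : Fin n → ℤ) : ℕ :=
  Nat.card { t : Fin n // ∃ h : (t : ℕ) + 1 < n, w ⟨(t : ℕ) + 1, h⟩ < w t }

/-- `w` contains the consecutive pair `(x, y)`. -/
def HasPair {n : ℕ} (w : Fin n → ℤ) (x y : ℤ) : Prop :=
  ∃ t : Fin n, ∃ h : (t : ℕ) + 1 < n, w t = x ∧ w ⟨(t : ℕ) + 1, h⟩ = y

/-- The statistic `f̃_ij(w)`: `1` if `w` contains a consecutive pair `(i,j)`, `(−i,j)`,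
`(−j,i)` or `(−j,−i)`; `−1` if `w` contains a consecutive pair `(j,i)`, `(j,−i)`,
`(i,−j)` or `(−i,−j)`; and `0` otherwise. -/
noncomputable def ftilde {n : ℕ} (w : Fin n → ℤ) (i j : ℤ) : ℤ :=
  if HasPair w i j ∨ HasPair w (-i) j ∨ HasPair w (-j) i ∨ HasPair w (-j) (-i) then 1
  else if HasPair w j i ∨ HasPair w j (-i) ∨ HasPair w i (-j) ∨ HasPair w (-i) (-j) then -1
  else 0

/-- Double sum picking a single pair of indices. -/
theorem double_pick (n : ℕ) (c d : ℕ) (hc : c ∈ Finset.Icc 1 n) (hd : d ∈ Finset.Icc 1 n)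
    (v : ℤ) :
    (∑ i ∈ Finset.Icc 1 n, ∑ j ∈ Finset.Icc 1 n,
      if i = c ∧ j = d then v else 0) = v := by
  classical
  rw [Finset.sum_eq_single_of_mem c hc]
  · rw [Finset.sum_eq_single_of_mem d hd]
    · simp
    · intro b _ hb; simp [hb]
  · intro b _ hb; apply Finset.sum_eq_zero; intro j _; simp [hb]

/-- for every `n ≥ 1` and every signed permutation `w` of `n`,
`Σ_{1 ≤ i < j ≤ n} f̃_ij(w) = (n − 1) − 2·des(w)`. -/
theorem sum_ftilde_eq (n : ℕ) (hn : 1 ≤ n) (w : Fin n → ℤ) (hw : IsSignedPerm w) :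
    (∑ i ∈ Finset.Icc 1 n, ∑ j ∈ Finset.Icc 1 n,
        if i < j then ftilde w (i : ℤ) (j : ℤ) else 0) =
      ((n : ℤ) - 1) - 2 * des w := by
  classical
  set W : ℕ → ℤ := fun t => if h : t < n then w ⟨t, h⟩ else 0 with hWdef
  have hWeq : ∀ t (h : t < n), W t = w ⟨t, h⟩ := fun t h => dif_pos h
  have hinj : ∀ t s, t < n → s < n → (W t).natAbs = (W s).natAbs → t = s := by
    intro t s ht hs h
    rw [hWeq t ht, hWeq s hs] at h
    exact congrArg Fin.val (hw.2 h)
  have habs : ∀ t, t < n → 1 ≤ (W t).natAbs ∧ (W t).natAbs ≤ n := by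
    intro t ht; rw [hWeq t ht]; exact hw.1 _
  have hpair : ∀ x y : ℤ, HasPair w x y ↔ ∃ t, t + 1 < n ∧ W t = x ∧ W (t + 1) = y := by
    intro x y
    constructor
    · rintro ⟨t, h, h1, h2⟩
      refine ⟨t.1, h, ?_, ?_⟩
      · rw [hWeq _ t.isLt]; simpa using h1
      · rw [hWeq _ h]; exact h2
    · rintro ⟨t, h, h1, h2⟩
      refine ⟨⟨t, by omega⟩, h, ?_, ?_⟩
      · rw [← hWeq _ (by omega : t < n)]; exact h1
      · rw [← hWeq _ h]; exact h2
  have hmem : ∀ t : ℕ, t ∈ Finset.range (n - 1) ↔ t + 1 < n := by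
    intro t; rw [Finset.mem_range]; omega
  -- the key formula for ftilde
  have key : ∀ i j : ℕ, 1 ≤ i → i < j → j ≤ n →
      ftilde w (i : ℤ) (j : ℤ) = ∑ t ∈ Finset.range (n - 1),
        (if ((W t).natAbs = i ∧ (W (t + 1)).natAbs = j) ∨
            ((W t).natAbs = j ∧ (W (t + 1)).natAbs = i) then
          (if W t < W (t + 1) then (1 : ℤ) else -1) else 0) := by
    intro i j hi hij hj
    have hPiff : (HasPair w (i : ℤ) (j : ℤ) ∨ HasPair w (-(i : ℤ)) (j : ℤ) ∨
        HasPair w (-(j : ℤ)) (i : ℤ) ∨ HasPair w (-(j : ℤ)) (-(i : ℤ))) ↔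
        ∃ t, t + 1 < n ∧ (((W t).natAbs = i ∧ (W (t + 1)).natAbs = j) ∨
            ((W t).natAbs = j ∧ (W (t + 1)).natAbs = i)) ∧ W t < W (t + 1) := by
      simp only [hpair]
      constructor
      · rintro (⟨t, h, h1, h2⟩ | ⟨t, h, h1, h2⟩ | ⟨t, h, h1, h2⟩ | ⟨t, h, h1, h2⟩) <;>
          exact ⟨t, h, by omega, by omega⟩
      · rintro ⟨t, h, hc, hlt⟩
        have hd : (W t = (i : ℤ) ∧ W (t + 1) = (j : ℤ)) ∨
            (W t = -(i : ℤ) ∧ W (t + 1) = (j : ℤ)) ∨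
            (W t = -(j : ℤ) ∧ W (t + 1) = (i : ℤ)) ∨
            (W t = -(j : ℤ) ∧ W (t + 1) = -(i : ℤ)) := by omega
        rcases hd with ⟨h1, h2⟩ | ⟨h1, h2⟩ | ⟨h1, h2⟩ | ⟨h1, h2⟩
        · exact Or.inl ⟨t, h, h1, h2⟩
        · exact Or.inr (Or.inl ⟨t, h, h1, h2⟩)
        · exact Or.inr (Or.inr (Or.inl ⟨t, h, h1, h2⟩))
        · exact Or.inr (Or.inr (Or.inr ⟨t, h, h1, h2⟩))
    have hNiff : (HasPair w (j : ℤ) (i : ℤ) ∨ HasPair w (j : ℤ) (-(i : ℤ)) ∨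
        HasPair w (i : ℤ) (-(j : ℤ)) ∨ HasPair w (-(i : ℤ)) (-(j : ℤ))) ↔
        ∃ t, t + 1 < n ∧ (((W t).natAbs = i ∧ (W (t + 1)).natAbs = j) ∨
            ((W t).natAbs = j ∧ (W (t + 1)).natAbs = i)) ∧ W (t + 1) < W t := by
      simp only [hpair]
      constructor
      · rintro (⟨t, h, h1, h2⟩ | ⟨t, h, h1, h2⟩ | ⟨t, h, h1, h2⟩ | ⟨t, h, h1, h2⟩) <;>
          exact ⟨t, h, by omega, by omega⟩
      · rintro ⟨t, h, hc, hlt⟩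
        have hd : (W t = (j : ℤ) ∧ W (t + 1) = (i : ℤ)) ∨
            (W t = (j : ℤ) ∧ W (t + 1) = -(i : ℤ)) ∨
            (W t = (i : ℤ) ∧ W (t + 1) = -(j : ℤ)) ∨
            (W t = -(i : ℤ) ∧ W (t + 1) = -(j : ℤ)) := by omega
        rcases hd with ⟨h1, h2⟩ | ⟨h1, h2⟩ | ⟨h1, h2⟩ | ⟨h1, h2⟩
        · exact Or.inl ⟨t, h, h1, h2⟩
        · exact Or.inr (Or.inl ⟨t, h, h1, h2⟩)
        · exact Or.inr (Or.inr (Or.inl ⟨t, h, h1, h2⟩))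
        · exact Or.inr (Or.inr (Or.inr ⟨t, h, h1, h2⟩))
    rw [ftilde]
    by_cases hP : (HasPair w (i : ℤ) (j : ℤ) ∨ HasPair w (-(i : ℤ)) (j : ℤ) ∨
        HasPair w (-(j : ℤ)) (i : ℤ) ∨ HasPair w (-(j : ℤ)) (-(i : ℤ)))
    · rw [if_pos hP]
      obtain ⟨t0, ht0, hc0, hlt0⟩ := hPiff.mp hP
      rw [Finset.sum_eq_single_of_mem t0 ((hmem t0).2 ht0)]
      · rw [if_pos hc0, if_pos hlt0]
      · intro b hb hbne
        rw [hmem] at hb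
        rw [if_neg]
        intro hcb
        rcases hc0 with ⟨e1, e2⟩ | ⟨e1, e2⟩ <;> rcases hcb with ⟨f1, f2⟩ | ⟨f1, f2⟩
        · exact hbne (hinj b t0 (by omega) (by omega) (by omega))
        · have h1 := hinj b (t0 + 1) (by omega) (by omega) (by omega)
          have h2 := hinj (b + 1) t0 (by omega) (by omega) (by omega)
          omega
        · have h1 := hinj b (t0 + 1) (by omega) (by omega) (by omega)
          have h2 := hinj (b + 1) t0 (by omega) (by omega) (by omega)
          omega
        · exact hbne (hinj b t0 (by omega) (by omega) (by omega))
    · rw [if_neg hP]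
      by_cases hN : (HasPair w (j : ℤ) (i : ℤ) ∨ HasPair w (j : ℤ) (-(i : ℤ)) ∨
          HasPair w (i : ℤ) (-(j : ℤ)) ∨ HasPair w (-(i : ℤ)) (-(j : ℤ)))
      · rw [if_pos hN]
        obtain ⟨t0, ht0, hc0, hlt0⟩ := hNiff.mp hN
        rw [Finset.sum_eq_single_of_mem t0 ((hmem t0).2 ht0)]
        · rw [if_pos hc0, if_neg (by omega)]
        · intro b hb hbne
          rw [hmem] at hb
          rw [if_neg]
          intro hcb
          rcases hc0 with ⟨e1, e2⟩ | ⟨e1, e2⟩ <;> rcases hcb with ⟨f1, f2⟩ | ⟨f1, f2⟩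
          · exact hbne (hinj b t0 (by omega) (by omega) (by omega))
          · have h1 := hinj b (t0 + 1) (by omega) (by omega) (by omega)
            have h2 := hinj (b + 1) t0 (by omega) (by omega) (by omega)
            omega
          · have h1 := hinj b (t0 + 1) (by omega) (by omega) (by omega)
            have h2 := hinj (b + 1) t0 (by omega) (by omega) (by omega)
            omega
          · exact hbne (hinj b t0 (by omega) (by omega) (by omega))
      · rw [if_neg hN]
        symm
        apply Finset.sum_eq_zero
        intro t ht
        rw [hmem] at ht
        rw [if_neg]
        intro hc
        have hne : W t ≠ W (t + 1) := by
          intro h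
          have := hinj t (t + 1) (by omega) (by omega) (by rw [h])
          omega
        rcases lt_or_gt_of_ne hne with h | h
        · exact hP (hPiff.mpr ⟨t, ht, hc, h⟩)
        · exact hN (hNiff.mpr ⟨t, ht, hc, h⟩)
  -- rewrite the double sum as a sum over positions
  have step1 : (∑ i ∈ Finset.Icc 1 n, ∑ j ∈ Finset.Icc 1 n,
        if i < j then ftilde w (i : ℤ) (j : ℤ) else 0) =
      ∑ t ∈ Finset.range (n - 1), (if W t < W (t + 1) then (1 : ℤ) else -1) := by
    have e1 : (∑ i ∈ Finset.Icc 1 n, ∑ j ∈ Finset.Icc 1 n,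
        if i < j then ftilde w (i : ℤ) (j : ℤ) else 0) =
        ∑ i ∈ Finset.Icc 1 n, ∑ j ∈ Finset.Icc 1 n, ∑ t ∈ Finset.range (n - 1),
          (if i < j ∧ (((W t).natAbs = i ∧ (W (t + 1)).natAbs = j) ∨
              ((W t).natAbs = j ∧ (W (t + 1)).natAbs = i)) then
            (if W t < W (t + 1) then (1 : ℤ) else -1) else 0) := by
      apply Finset.sum_congr rfl; intro i hi
      apply Finset.sum_congr rfl; intro j hj
      rw [Finset.mem_Icc] at hi hj
      by_cases hij : i < j
      · rw [if_pos hij, key i j hi.1 hij hj.2]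
        apply Finset.sum_congr rfl; intro t _
        simp [hij]
      · rw [if_neg hij]
        symm; apply Finset.sum_eq_zero; intro t _
        rw [if_neg]; rintro ⟨h, -⟩; exact hij h
    rw [e1]
    have e2 : ∀ f : ℕ → ℕ → ℕ → ℤ,
        (∑ i ∈ Finset.Icc 1 n, ∑ j ∈ Finset.Icc 1 n, ∑ t ∈ Finset.range (n - 1), f i j t) =
        ∑ t ∈ Finset.range (n - 1), ∑ i ∈ Finset.Icc 1 n, ∑ j ∈ Finset.Icc 1 n, f i j t := by
      intro f
      have h1 : ∀ i : ℕ, (∑ j ∈ Finset.Icc 1 n, ∑ t ∈ Finset.range (n - 1), f i j t) =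
          ∑ t ∈ Finset.range (n - 1), ∑ j ∈ Finset.Icc 1 n, f i j t :=
        fun i => Finset.sum_comm
      simp only [h1]
      exact Finset.sum_comm
    rw [e2]
    apply Finset.sum_congr rfl
    intro t ht
    rw [hmem] at ht
    set a := (W t).natAbs with ha
    set b := (W (t + 1)).natAbs with hb
    have hane : a ≠ b := by
      intro h
      have := hinj t (t + 1) (by omega) (by omega) h
      omega
    have ha1 := habs t (by omega)
    have hb1 := habs (t + 1) (by omega)
    rcases lt_or_gt_of_ne hane with h | h
    · have := double_pick n a b (Finset.mem_Icc.2 ⟨by omega, by omega⟩)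
        (Finset.mem_Icc.2 ⟨by omega, by omega⟩) (if W t < W (t + 1) then (1 : ℤ) else -1)
      refine (Finset.sum_congr rfl fun i _ => Finset.sum_congr rfl fun j _ => ?_).trans this
      exact if_congr (by omega) rfl rfl
    · have := double_pick n b a (Finset.mem_Icc.2 ⟨by omega, by omega⟩)
        (Finset.mem_Icc.2 ⟨by omega, by omega⟩) (if W t < W (t + 1) then (1 : ℤ) else -1)
      refine (Finset.sum_congr rfl fun i _ => Finset.sum_congr rfl fun j _ => ?_).trans this
      exact if_congr (by omega) rfl rfl
  rw [step1]
  -- compute des as a filter card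
  have hdes : des w = ((Finset.range (n - 1)).filter (fun t => W (t + 1) < W t)).card := by
    rw [des, Nat.card_eq_fintype_card, Fintype.card_subtype]
    apply Finset.card_bij (fun (t : Fin n) _ => (t : ℕ))
    · intro t ht
      rw [Finset.mem_filter] at ht ⊢
      obtain ⟨-, h, hlt⟩ := ht
      refine ⟨(hmem _).2 h, ?_⟩
      rw [hWeq _ h, hWeq _ t.isLt]
      simpa using hlt
    · intro t1 _ t2 _ h
      exact Fin.val_injective h
    · intro b hb
      rw [Finset.mem_filter, hmem] at hb
      refine ⟨⟨b, by omega⟩, ?_, rfl⟩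
      rw [Finset.mem_filter]
      refine ⟨Finset.mem_univ _, hb.1, ?_⟩
      rw [← hWeq _ hb.1, ← hWeq _ (by omega : b < n)]
      exact hb.2
  -- final computation
  have e3 : ∀ t ∈ Finset.range (n - 1),
      (if W t < W (t + 1) then (1 : ℤ) else -1) =
      1 - 2 * (if W (t + 1) < W t then (1 : ℤ) else 0) := by
    intro t ht
    rw [hmem] at ht
    have hne : W t ≠ W (t + 1) := by
      intro h
      have := hinj t (t + 1) (by omega) (by omega) (by rw [h])
      omega
    by_cases h : W t < W (t + 1)
    · rw [if_pos h, if_neg (by omega)]; ring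
    · rw [if_neg h, if_pos (by omega)]; ring
  rw [Finset.sum_congr rfl e3, Finset.sum_sub_distrib, ← Finset.mul_sum,
    Finset.sum_boole, hdes]
  simp only [Finset.sum_const, Finset.card_range, nsmul_eq_mul, mul_one]
  have : ((n - 1 : ℕ) : ℤ) = (n : ℤ) - 1 := by omega
  rw [this]
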